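/- Let w be a word of length n ≥ 2 such that each letter appears at most k times in w. Then f(w) ≤ max{4k, n} + 2. -/
import Mathlib


namespace WordGrid

variable {α : Type*}

/-- The `i`-th row of the grid `G` contains the word `w` (forwards or backwards). -/
def rowC {n : ℕ} (w : Fin n → α) (G : Fin n → Fin n → α) (i : Fin n) : Prop :=
  (∀ j, G i j = w j) ∨ (∀ j, G i j = w j.rev)

/-- The `i`-th column of the grid `G` contains the word `w` (forwards or backwards). -/
def colC {n : ℕ} (w : Fin n → α) (G : Fin n → Fin n → α) (i : Fin n) : Prop :=
  (∀ j, G j i = w j) ∨ (∀ j, G j i = w j.rev)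

/-- The main diagonal of the grid `G` contains the word `w`. -/
def diagC {n : ℕ} (w : Fin n → α) (G : Fin n → Fin n → α) : Prop :=
  (∀ j, G j j = w j) ∨ (∀ j, G j j = w j.rev)

/-- The anti-diagonal of the grid `G` contains the word `w`. -/
def adiagC {n : ℕ} (w : Fin n → α) (G : Fin n → Fin n → α) : Prop :=
  (∀ j, G j j.rev = w j) ∨ (∀ j, G j j.rev = w j.rev)

open Classical in
/-- `f(w,G)`: the number of rows, columns and diagonals of `G` containing `w`. -/
noncomputable def count {n : ℕ} (w : Fin n → α) (G : Fin n → Fin n → α) : ℕ :=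
  {i | rowC w G i}.ncard + {i | colC w G i}.ncard
    + (if diagC w G then 1 else 0) + (if adiagC w G then 1 else 0)

/-- `f(w)`: the maximum of `f(w,G)` over all `n`-grids `G`. -/
noncomputable def fword {n : ℕ} (w : Fin n → α) : ℕ :=
  sSup {m | ∃ G : Fin n → Fin n → α, count w G = m}

lemma fiber_rev_le {n k : ℕ} (w : Fin n → α)
    (h : ∀ a : α, {i | w i = a}.ncard ≤ k) (a : α) :
    {i : Fin n | w i.rev = a}.ncard ≤ k := by
  have himg : Fin.rev '' {i : Fin n | w i = a} = {i : Fin n | w i.rev = a} := by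
    ext j
    constructor
    · rintro ⟨i, hi, rfl⟩
      simpa [Fin.rev_rev] using hi
    · intro hj
      exact ⟨j.rev, hj, by simp [Fin.rev_rev]⟩
  calc {i : Fin n | w i.rev = a}.ncard
      = (Fin.rev '' {i : Fin n | w i = a}).ncard := by rw [himg]
    _ = {i : Fin n | w i = a}.ncard :=
        Set.ncard_image_of_injective _ Fin.rev_injective
    _ ≤ k := h a

lemma key_cols {n k : ℕ} (w : Fin n → α) (G : Fin n → Fin n → α)
    (h : ∀ a : α, {i | w i = a}.ncard ≤ k) (i : Fin n) (hi : rowC w G i) :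
    {j | colC w G j}.ncard ≤ 2 * k := by
  have hsub : {j | colC w G j} ⊆ {j | G i j = w i} ∪ {j | G i j = w i.rev} := by
    intro j hj
    rcases hj with h1 | h1
    · exact Or.inl (h1 i)
    · exact Or.inr (h1 i)
  have h1 : {j | G i j = w i}.ncard ≤ k := by
    rcases hi with hr | hr
    · have : {j | G i j = w i} = {j : Fin n | w j = w i} := by
        ext j; simp [hr j]
      rw [this]; exact h _
    · have : {j | G i j = w i} = {j : Fin n | w j.rev = w i} := by
        ext j; simp [hr j]
      rw [this]; exact fiber_rev_le w h _
  have h2 : {j | G i j = w i.rev}.ncard ≤ k := by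
    rcases hi with hr | hr
    · have : {j | G i j = w i.rev} = {j : Fin n | w j = w i.rev} := by
        ext j; simp [hr j]
      rw [this]; exact h _
    · have : {j | G i j = w i.rev} = {j : Fin n | w j.rev = w i.rev} := by
        ext j; simp [hr j]
      rw [this]; exact fiber_rev_le w h _
  calc {j | colC w G j}.ncard
      ≤ ({j | G i j = w i} ∪ {j | G i j = w i.rev}).ncard :=
        Set.ncard_le_ncard hsub (Set.toFinite _)
    _ ≤ {j | G i j = w i}.ncard + {j | G i j = w i.rev}.ncard :=
        Set.ncard_union_le _ _
    _ ≤ 2 * k := by omega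

lemma ncard_le_n {n : ℕ} (s : Set (Fin n)) : s.ncard ≤ n := by
  calc s.ncard ≤ (Set.univ : Set (Fin n)).ncard :=
        Set.ncard_le_ncard (Set.subset_univ _) (Set.toFinite _)
    _ = n := by simp [Set.ncard_univ]

lemma count_le {n k : ℕ} (w : Fin n → α) (G : Fin n → Fin n → α)
    (h : ∀ a : α, {i | w i = a}.ncard ≤ k) :
    count w G ≤ max (4 * k) n + 2 := by
  classical
  have hmain : {i | rowC w G i}.ncard + {i | colC w G i}.ncard ≤ max (4 * k) n := by
    rcases Set.eq_empty_or_nonempty {i | rowC w G i} with hR | ⟨i, hi⟩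
    · rw [hR, Set.ncard_empty, zero_add]
      exact le_trans (ncard_le_n _) (le_max_right _ _)
    rcases Set.eq_empty_or_nonempty {i | colC w G i} with hC | ⟨j, hj⟩
    · rw [hC, Set.ncard_empty, add_zero]
      exact le_trans (ncard_le_n _) (le_max_right _ _)
    · have hca : {j | colC w G j}.ncard ≤ 2 * k := key_cols w G h i hi
      have hra : {i | rowC w G i}.ncard ≤ 2 * k :=
        key_cols w (fun a b => G b a) h j hj
      have : 2 * k + 2 * k ≤ max (4 * k) n := le_trans (by omega) (le_max_left _ _)
      omega
  have hd : (if diagC w G then 1 else 0) ≤ 1 := by split <;> omega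
  have had : (if adiagC w G then 1 else 0) ≤ 1 := by split <;> omega
  unfold count
  omega

theorem fword_upper_few {n k : ℕ} (hn : 2 ≤ n) (w : Fin n → α)
    (h : ∀ a : α, {i | w i = a}.ncard ≤ k) :
    fword w ≤ max (4 * k) n + 2 := by
  refine csSup_le ⟨count w (fun _ j => w j), fun _ j => w j, rfl⟩ ?_
  rintro m ⟨G, rfl⟩
  exact count_le w G h

end WordGrid
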